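/- Lambert W inversion bounds: defining W̄_{-1}(x) = -W_{-1}(-e^{-x}) for x ≥ 1 (with W_{-1} the negative branch of the Lambert W function), for all y ≥ 1 and x ≥ 1 one has W̄_{-1}(y) ≤ x if and only if y ≤ x - log(x); moreover for all x > 1, x + log(x) ≤ W̄_{-1}(x) ≤ x + log(x) + min{1/2, 1/√x}. -/

import Mathlib

/-- `W̄₋₁(x) = -W₋₁(-e^{-x})`: equivalently, the largest solution `u ≥ 1` of
`u - log u = x`. -/
noncomputable def barW (x : ℝ) : ℝ :=
  sSup {u : ℝ | 1 ≤ u ∧ u - Real.log u = x}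

open Real Set

private lemma fcont : ContinuousOn (fun u : ℝ => u - Real.log u) (Ici 1) := by
  apply ContinuousOn.sub continuousOn_id
  exact Real.continuousOn_log.mono (by intro x hx; simp at hx ⊢; linarith)

private lemma fmono : StrictMonoOn (fun u : ℝ => u - Real.log u) (Ici 1) := by
  apply strictMonoOn_of_deriv_pos (convex_Ici 1) fcont
  intro x hx
  rw [interior_Ici] at hx
  have hx0 : x ≠ 0 := by intro h; rw [h] at hx; norm_num at hx
  have : deriv (fun u : ℝ => u - Real.log u) x = 1 - x⁻¹ := by
    rw [deriv_fun_sub differentiableAt_fun_id (Real.differentiableAt_log hx0)]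
    simp [Real.deriv_log]
  rw [this]
  have : x⁻¹ < 1 := by rw [inv_lt_one_iff₀]; right; exact hx
  linarith

private lemma exists_root {y : ℝ} (hy : 1 ≤ y) :
    ∃ u, 1 ≤ u ∧ u - Real.log u = y := by
  have h1 : (1:ℝ) ≤ 2 * y := by linarith
  have hcont : ContinuousOn (fun u : ℝ => u - Real.log u) (Icc 1 (2*y)) :=
    fcont.mono (Icc_subset_Ici_self)
  have hf1 : (fun u : ℝ => u - Real.log u) 1 = 1 := by simp
  have hf2 : y ≤ (fun u : ℝ => u - Real.log u) (2*y) := by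
    simp only
    have hl2 : Real.log (2*y) = Real.log 2 + Real.log y := by
      rw [Real.log_mul (by norm_num) (by linarith)]
    have h2 : Real.log 2 ≤ 1 := by
      have := Real.log_le_sub_one_of_pos (by norm_num : (0:ℝ) < 2); linarith
    have h3 : Real.log y ≤ y - 1 := Real.log_le_sub_one_of_pos (by linarith)
    linarith
  have := intermediate_value_Icc h1 hcont
  have hmem : y ∈ Icc ((fun u : ℝ => u - Real.log u) 1) ((fun u : ℝ => u - Real.log u) (2*y)) := by
    constructor
    · rw [hf1]; exact hy
    · exact hf2
  obtain ⟨u, hu, hueq⟩ := this hmem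
  exact ⟨u, hu.1, hueq⟩

private lemma barW_eq {y u : ℝ} (hu : 1 ≤ u) (heq : u - Real.log u = y) :
    barW y = u := by
  have hset : {v : ℝ | 1 ≤ v ∧ v - Real.log v = y} = {u} := by
    ext v
    simp only [mem_setOf_eq, mem_singleton_iff]
    constructor
    · rintro ⟨hv, hveq⟩
      exact fmono.injOn hv hu (by simp [hveq, heq])
    · rintro rfl; exact ⟨hu, heq⟩
  rw [barW, hset, csSup_singleton]

-- key: 2 log t ≤ t - 1/t for t ≥ 1
private lemma two_log_le {t : ℝ} (ht : 1 ≤ t) : 2 * Real.log t ≤ t - t⁻¹ := by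
  have hmono : MonotoneOn (fun t : ℝ => t - t⁻¹ - 2 * Real.log t) (Ici 1) := by
    apply monotoneOn_of_deriv_nonneg (convex_Ici 1)
    · apply ContinuousOn.sub
      · apply ContinuousOn.sub continuousOn_id
        exact continuousOn_id.inv₀ (fun x hx => by
          simp only [mem_Ici] at hx; simp only [id]; intro h; rw [h] at hx; norm_num at hx)
      · exact continuousOn_const.mul (Real.continuousOn_log.mono (fun x hx => by
          simp only [mem_Ici] at hx; simp only [mem_compl_iff, mem_singleton_iff]
          intro h; rw [h] at hx; norm_num at hx))
    · intro x hx
      rw [interior_Ici] at hx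
      have hx0 : x ≠ 0 := by intro h; rw [h] at hx; norm_num at hx
      exact ((differentiableAt_fun_id.sub (differentiableAt_inv hx0)).sub
        ((Real.differentiableAt_log hx0).const_mul 2)).differentiableWithinAt
    · intro x hx
      rw [interior_Ici] at hx
      have hx0 : x ≠ 0 := by intro h; rw [h] at hx; norm_num at hx
      have hd : deriv (fun t : ℝ => t - t⁻¹ - 2 * Real.log t) x
          = 1 - (-(x^2)⁻¹) - 2 * x⁻¹ := by
        rw [deriv_fun_sub, deriv_fun_sub]
        · rw [deriv_id'', deriv_inv, deriv_const_mul _ (Real.differentiableAt_log hx0), Real.deriv_log]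
        · exact differentiableAt_fun_id
        · exact differentiableAt_inv hx0
        · exact (differentiableAt_fun_id.sub (differentiableAt_inv hx0))
        · exact (Real.differentiableAt_log hx0).const_mul 2
      rw [hd]
      have h1 : (1 - x⁻¹)^2 ≥ 0 := sq_nonneg _
      have h2 : (1 - x⁻¹)^2 = 1 + (x^2)⁻¹ - 2 * x⁻¹ := by
        field_simp; ring
      nlinarith
  have := hmono (mem_Ici.mpr le_rfl) (mem_Ici.mpr ht) ht
  simp at this
  linarith

-- tangent line bound at a
private lemma log_tangent {x a : ℝ} (hx : 0 < x) (ha : 0 < a) :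
    Real.log x ≤ Real.log a + x / a - 1 := by
  have := Real.log_le_sub_one_of_pos (show (0:ℝ) < x / a by positivity)
  rw [Real.log_div (ne_of_gt hx) (ne_of_gt ha)] at this
  linarith

private lemma exp_quad {e : ℝ} (he : 0 ≤ e) : 1 + e + e^2/2 ≤ Real.exp e := by
  have := Real.sum_le_exp_of_nonneg he 3
  simp [Finset.sum_range_succ, Nat.factorial] at this
  linarith

/-- Lambert `W` inversion bounds: for `x, y ≥ 1`, `W̄₋₁(y) ≤ x ↔ y ≤ x - log x`;
moreover, for `x > 1`, `x + log x ≤ W̄₋₁(x) ≤ x + log x + min{1/2, 1/√x}`. -/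
theorem barW_inversion_bounds :
    (∀ x y : ℝ, 1 ≤ x → 1 ≤ y → (barW y ≤ x ↔ y ≤ x - Real.log x)) ∧
    (∀ x : ℝ, 1 < x →
      x + Real.log x ≤ barW x ∧
      barW x ≤ x + Real.log x + min (1 / 2) (1 / Real.sqrt x)) := by
  have key : ∀ x y : ℝ, 1 ≤ x → 1 ≤ y → (barW y ≤ x ↔ y ≤ x - Real.log x) := by
    intro x y hx hy
    obtain ⟨u, hu, heq⟩ := exists_root hy
    rw [barW_eq hu heq]
    constructor
    · intro h
      have := fmono.monotoneOn (mem_Ici.mpr hu) (mem_Ici.mpr hx) h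
      simpa [heq] using this
    · intro h
      by_contra hc
      push_neg at hc
      have := fmono (mem_Ici.mpr hx) (mem_Ici.mpr hu) hc
      simp only [heq] at this
      linarith
  refine ⟨key, fun x hx => ?_⟩
  have hx0 : (0:ℝ) < x := by linarith
  have hlx : 0 < Real.log x := Real.log_pos hx
  obtain ⟨u, hu, heq⟩ := exists_root (le_of_lt hx)
  rw [barW_eq hu heq]
  constructor
  · -- lower bound: x + log x ≤ u
    by_contra hc
    push_neg at hc
    have hb1 : (1:ℝ) ≤ x + Real.log x := by linarith
    have := fmono (mem_Ici.mpr hu) (mem_Ici.mpr hb1) hc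
    simp only [heq] at this
    have hlog : Real.log x ≤ Real.log (x + Real.log x) :=
      Real.log_le_log hx0 (by linarith)
    linarith
  · -- upper bound
    set e := min (1/2 : ℝ) (1 / Real.sqrt x) with he_def
    have hsx : 0 < Real.sqrt x := Real.sqrt_pos.mpr hx0
    have he0 : 0 < e := lt_min (by norm_num) (by positivity)
    set b := x + Real.log x + e with hb_def
    have hb1 : (1:ℝ) ≤ b := by simp only [hb_def]; linarith
    -- claim : x ≤ b - log b, i.e. log b ≤ log x + e
    have hkey : Real.log x ≤ (x - 1) * e + x * e^2 / 2 := by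
      rcases le_or_gt (1 / Real.sqrt x) (1/2 : ℝ) with hcase | hcase
      · -- e = 1/√x
        have he : e = 1 / Real.sqrt x := min_eq_right hcase
        have hsq : Real.sqrt x * Real.sqrt x = x := Real.mul_self_sqrt hx0.le
        have h2l := two_log_le (show (1:ℝ) ≤ Real.sqrt x by
          rw [show (1:ℝ) = Real.sqrt 1 by simp]; exact Real.sqrt_le_sqrt hx.le)
        have hlog : Real.log x = 2 * Real.log (Real.sqrt x) := by
          rw [Real.log_sqrt hx0.le]; ring
        rw [hlog, he]
        have h1 : (x - 1) * (1 / Real.sqrt x) = Real.sqrt x - 1 / Real.sqrt x := by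
          field_simp
          rw [Real.sq_sqrt hx0.le]
        have h2 : x * (1 / Real.sqrt x)^2 / 2 = 1/2 := by
          field_simp
          rw [Real.sq_sqrt hx0.le]
        rw [h1, h2]
        have : (Real.sqrt x)⁻¹ = 1 / Real.sqrt x := by rw [inv_eq_one_div]
        linarith [h2l, this ▸ h2l]
      · -- e = 1/2
        have he : e = 1/2 := min_eq_left hcase.le
        have htang := log_tangent hx0 (show (0:ℝ) < 8/5 by norm_num)
        have hlog85 : Real.log (8/5 : ℝ) ≤ 1/2 := by
          rw [show (8/5:ℝ) = Real.exp (Real.log (8/5)) from (Real.exp_log (by norm_num)).symm] at *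
          rw [Real.log_exp]
          by_contra hcc
          push_neg at hcc
          have := exp_quad (show (0:ℝ) ≤ 1/2 by norm_num)
          have h2 : Real.exp (1/2) < Real.exp (Real.log (8/5:ℝ)) := Real.exp_lt_exp.mpr hcc
          rw [Real.exp_log (by norm_num)] at h2
          norm_num at this
          linarith
        rw [he]
        nlinarith
    have hexp : b ≤ x * Real.exp e := by
      have := exp_quad he0.le
      have : x * (1 + e + e^2/2) ≤ x * Real.exp e :=
        mul_le_mul_of_nonneg_left this hx0.le
      simp only [hb_def]
      nlinarith
    have hlogb : Real.log b ≤ Real.log x + e := by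
      calc Real.log b ≤ Real.log (x * Real.exp e) := Real.log_le_log (by linarith) hexp
        _ = Real.log x + e := by rw [Real.log_mul (ne_of_gt hx0) (Real.exp_ne_zero e), Real.log_exp]
    have hfb : x ≤ b - Real.log b := by simp only [hb_def] at hlogb ⊢; linarith
    by_contra hc
    push_neg at hc
    have := fmono (mem_Ici.mpr hb1) (mem_Ici.mpr hu) hc
    simp only [heq] at this
    linarith
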